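/- Let A be a real m×m matrix with ⟨Ay, y⟩ ≥ λ_A ‖y‖² for all y ∈ ℝ^m (λ_A > 0), let g̃ : ℝ^n × ℝ^m → ℝ^m be Lipschitz continuous with constant L satisfying λ_A > L, let ε > 0, and let ω : ℝ → ℝ^m be continuous. Suppose x_1, x_2 ∈ ℝ^n and y_1, y_2 : ℝ → ℝ^m are bounded continuous functions such that for i = 1,2 and all s ≤ t, y_i(t) = y_i(s) + (1/ε) ∫_s^t (−A y_i(v) + g̃(x_i, y_i(v))) dv + ω(t) − ω(s). Then for all t ∈ ℝ, ‖y_1(t) − y_2(t)‖ ≤ (L/(λ_A − L)) ‖x_1 − x_2‖. -/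

import Mathlib

open scoped RealInnerProductSpace
open MeasureTheory
set_option maxHeartbeats 1000000

theorem fixed_point_lipschitz_in_x {n m : ℕ} (A : Matrix (Fin m) (Fin m) ℝ) (lamA L : ℝ)
    (hlam : 0 < lamA) (hLlam : L < lamA)
    (hA : ∀ y : EuclideanSpace ℝ (Fin m), lamA * ‖y‖ ^ 2 ≤ ⟪Matrix.toEuclideanLin A y, y⟫)
    (g : EuclideanSpace ℝ (Fin n) → EuclideanSpace ℝ (Fin m) → EuclideanSpace ℝ (Fin m))
    (hg : ∀ x₁ x₂ y₁ y₂, ‖g x₁ y₁ - g x₂ y₂‖ ≤ L * (‖x₁ - x₂‖ + ‖y₁ - y₂‖))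
    (ε : ℝ) (hε : 0 < ε)
    (ω : ℝ → EuclideanSpace ℝ (Fin m)) (hω : Continuous ω)
    (x₁ x₂ : EuclideanSpace ℝ (Fin n))
    (y₁ y₂ : ℝ → EuclideanSpace ℝ (Fin m))
    (hy₁c : Continuous y₁) (hy₂c : Continuous y₂)
    (hy₁b : ∃ M : ℝ, ∀ t : ℝ, ‖y₁ t‖ ≤ M) (hy₂b : ∃ M : ℝ, ∀ t : ℝ, ‖y₂ t‖ ≤ M)
    (hy₁ : ∀ s t : ℝ, s ≤ t → y₁ t = y₁ s
      + ε⁻¹ • (∫ v in s..t, (-(Matrix.toEuclideanLin A (y₁ v)) + g x₁ (y₁ v)))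
      + (ω t - ω s))
    (hy₂ : ∀ s t : ℝ, s ≤ t → y₂ t = y₂ s
      + ε⁻¹ • (∫ v in s..t, (-(Matrix.toEuclideanLin A (y₂ v)) + g x₂ (y₂ v)))
      + (ω t - ω s)) :
    ∀ t : ℝ, ‖y₁ t - y₂ t‖ ≤ (L / (lamA - L)) * ‖x₁ - x₂‖ := by
  obtain ⟨M₁, hM₁⟩ := hy₁b
  obtain ⟨M₂, hM₂⟩ := hy₂b
  have hTc : Continuous (Matrix.toEuclideanLin A :
      EuclideanSpace ℝ (Fin m) → EuclideanSpace ℝ (Fin m)) :=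
    LinearMap.continuous_of_finiteDimensional _
  set z : ℝ → EuclideanSpace ℝ (Fin m) := fun t => y₁ t - y₂ t with hzdef
  have hzc : Continuous z := hy₁c.sub hy₂c
  -- continuity of g in second variable
  have hgL : ∀ x, Continuous (g x) := by
    intro x
    have : LipschitzWith (Real.toNNReal L) (g x) := by
      apply LipschitzWith.of_dist_le_mul
      intro a b
      have h := hg x x a b
      simp only [sub_self, norm_zero, zero_add] at h
      rw [dist_eq_norm, dist_eq_norm]
      exact h.trans (mul_le_mul_of_nonneg_right (Real.le_coe_toNNReal L) (norm_nonneg _))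
    exact this.continuous
  set F : ℝ → EuclideanSpace ℝ (Fin m) := fun v =>
    ε⁻¹ • (-(Matrix.toEuclideanLin A (z v)) + (g x₁ (y₁ v) - g x₂ (y₂ v))) with hFdef
  have hFc : Continuous F := by
    apply Continuous.fun_const_smul
    exact ((hTc.comp hzc).neg.add (((hgL x₁).comp hy₁c).sub ((hgL x₂).comp hy₂c)))
  -- Step A: integral equation for z
  have hzeq : ∀ s t : ℝ, s ≤ t → z t = z s + ∫ v in s..t, F v := by
    intro s t hst
    have h1c : Continuous fun v => -(Matrix.toEuclideanLin A (y₁ v)) + g x₁ (y₁ v) :=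
      ((hTc.comp hy₁c).neg.add ((hgL x₁).comp hy₁c))
    have h2c : Continuous fun v => -(Matrix.toEuclideanLin A (y₂ v)) + g x₂ (y₂ v) :=
      ((hTc.comp hy₂c).neg.add ((hgL x₂).comp hy₂c))
    have hint : (∫ v in s..t, F v) = ε⁻¹ • ((∫ v in s..t, (-(Matrix.toEuclideanLin A (y₁ v)) + g x₁ (y₁ v))) - (∫ v in s..t, (-(Matrix.toEuclideanLin A (y₂ v)) + g x₂ (y₂ v)))) := by
      rw [← intervalIntegral.integral_sub (h1c.intervalIntegrable s t) (h2c.intervalIntegrable s t),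
        ← intervalIntegral.integral_smul]
      apply intervalIntegral.integral_congr
      intro v _
      simp only [hFdef, hzdef, map_sub]
      module
    rw [hint]
    simp only [hzdef]
    rw [hy₁ s t hst, hy₂ s t hst]
    module
  -- Step B: derivative of z
  have hzd : ∀ t : ℝ, HasDerivAt z (F t) t := by
    have hrep : ∀ t : ℝ, z t = z 0 + ∫ v in (0:ℝ)..t, F v := by
      intro t
      rcases le_total 0 t with h | h
      · exact hzeq 0 t h
      · have := hzeq t 0 h
        rw [intervalIntegral.integral_symm]
        rw [this]
        abel
    intro t
    have : HasDerivAt (fun u => z 0 + ∫ v in (0:ℝ)..u, F v) (F t) t :=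
      ((hFc.integral_hasStrictDerivAt 0 t).hasDerivAt).const_add (z 0)
    exact this.congr_of_eventuallyEq (Filter.Eventually.of_forall fun u => hrep u)
  -- constants
  set μ : ℝ := lamA - L with hμdef
  have hμ : 0 < μ := by simp [hμdef]; linarith
  set D : ℝ := L * ‖x₁ - x₂‖ with hDdef
  have hD : 0 ≤ D := by
    have h := hg x₁ x₂ 0 0
    simp only [sub_self, norm_zero, add_zero] at h
    exact le_trans (norm_nonneg _) h
  set C : ℝ := D / μ with hCdef
  have hC : 0 ≤ C := div_nonneg hD hμ.le
  set K : ℝ := μ / ε with hKdef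
  have hK : 0 < K := div_pos hμ hε
  set h : ℝ → ℝ := fun t => ⟪z t, z t⟫ - C ^ 2 with hhdef
  have hnorm : ∀ t, ⟪z t, z t⟫ = ‖z t‖ ^ 2 := fun t => real_inner_self_eq_norm_sq _
  -- derivative of h and the key differential inequality
  have hhd : ∀ t : ℝ, HasDerivAt h (⟪z t, F t⟫ + ⟪F t, z t⟫) t := by
    intro t
    exact (HasDerivAt.inner ℝ (hzd t) (hzd t)).sub_const _
  have hkey : ∀ t : ℝ, ⟪z t, F t⟫ + ⟪F t, z t⟫ ≤ -K * h t := by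
    intro t
    have hsymm : ⟪z t, F t⟫ = ⟪F t, z t⟫ := real_inner_comm _ _
    have hFz : ⟪F t, z t⟫ = ε⁻¹ * (-⟪Matrix.toEuclideanLin A (z t), z t⟫
        + ⟪g x₁ (y₁ t) - g x₂ (y₂ t), z t⟫) := by
      simp only [hFdef]
      rw [real_inner_smul_left, inner_add_left, inner_neg_left]
    have hAz : lamA * ‖z t‖ ^ 2 ≤ ⟪Matrix.toEuclideanLin A (z t), z t⟫ := hA (z t)
    have hgz : ⟪g x₁ (y₁ t) - g x₂ (y₂ t), z t⟫ ≤ (D + L * ‖z t‖) * ‖z t‖ := by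
      have h1 : ⟪g x₁ (y₁ t) - g x₂ (y₂ t), z t⟫ ≤ ‖g x₁ (y₁ t) - g x₂ (y₂ t)‖ * ‖z t‖ :=
        real_inner_le_norm _ _
      have h2 : ‖g x₁ (y₁ t) - g x₂ (y₂ t)‖ ≤ L * (‖x₁ - x₂‖ + ‖y₁ t - y₂ t‖) := hg _ _ _ _
      have h3 : ‖y₁ t - y₂ t‖ = ‖z t‖ := rfl
      nlinarith [norm_nonneg (z t)]
    rw [hsymm, hFz]
    have ha : (0:ℝ) ≤ ‖z t‖ := norm_nonneg _
    have hinv : (0:ℝ) < ε⁻¹ := inv_pos.mpr hε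
    have hhval : h t = ‖z t‖ ^ 2 - C ^ 2 := by rw [hhdef]; simp [hnorm t]
    rw [hhval, hKdef]
    have hμC : μ * C = D := by
      rw [hCdef]; field_simp
    -- goal: 2 * (ε⁻¹ * (-⟪Az,z⟫ + ⟪Δg,z⟫)) ≤ -(μ/ε) * (a² - C²)
    have hcore : -⟪Matrix.toEuclideanLin A (z t), z t⟫ + ⟪g x₁ (y₁ t) - g x₂ (y₂ t), z t⟫
        ≤ -(μ/2) * (‖z t‖ ^ 2 - C ^ 2) := by
      nlinarith [sq_nonneg (‖z t‖ - C), hAz, hgz]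
    have : ε⁻¹ * (-⟪Matrix.toEuclideanLin A (z t), z t⟫ + ⟪g x₁ (y₁ t) - g x₂ (y₂ t), z t⟫)
        ≤ ε⁻¹ * (-(μ/2) * (‖z t‖ ^ 2 - C ^ 2)) := by
      exact mul_le_mul_of_nonneg_left hcore hinv.le
    have heq : ε⁻¹ * (-(μ/2) * (‖z t‖ ^ 2 - C ^ 2)) * 2 = -(μ/ε) * (‖z t‖ ^ 2 - C ^ 2) := by
      field_simp
    linarith [this]
  -- Step E: H = h * exp(K t) is antitone
  set H : ℝ → ℝ := fun t => h t * Real.exp (K * t) with hHdef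
  have hHd : ∀ t : ℝ, HasDerivAt H
      ((⟪z t, F t⟫ + ⟪F t, z t⟫) * Real.exp (K * t) + h t * (K * Real.exp (K * t))) t := by
    intro t
    have he : HasDerivAt (fun t : ℝ => Real.exp (K * t)) (K * Real.exp (K * t)) t := by
      simpa [mul_comm] using ((hasDerivAt_id t).const_mul K).exp
    exact (hhd t).mul he
  have hHanti : Antitone H := by
    apply antitone_of_hasDerivAt_nonpos hHd
    intro t
    have hexp : 0 < Real.exp (K * t) := Real.exp_pos _
    have := hkey t
    have : (⟪z t, F t⟫ + ⟪F t, z t⟫) * Real.exp (K * t) ≤ (-K * h t) * Real.exp (K * t) :=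
      mul_le_mul_of_nonneg_right this hexp.le
    have hz0 : (-K * h t) * Real.exp (K * t) + h t * (K * Real.exp (K * t)) = 0 := by ring
    simp only [Pi.zero_apply]
    linarith
  -- boundedness of h
  have hhub : ∀ t : ℝ, h t ≤ (M₁ + M₂) ^ 2 := by
    intro t
    have hzb : ‖z t‖ ≤ M₁ + M₂ := (norm_sub_le _ _).trans (add_le_add (hM₁ t) (hM₂ t))
    have : ⟪z t, z t⟫ = ‖z t‖ ^ 2 := hnorm t
    have hC2 : 0 ≤ C ^ 2 := sq_nonneg _
    have hzn : 0 ≤ ‖z t‖ := norm_nonneg _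
    have hq : ‖z t‖ ^ 2 ≤ (M₁ + M₂) ^ 2 := by nlinarith
    have hv : h t = ‖z t‖ ^ 2 - C ^ 2 := by rw [hhdef]; simp [hnorm t]
    rw [hv]; linarith
  -- main conclusion: h t ≤ 0 for all t
  intro t₀
  have hmain : h t₀ ≤ 0 := by
    by_contra hpos
    push_neg at hpos
    set B : ℝ := (M₁ + M₂) ^ 2 with hBdef
    have hB0 : 0 ≤ B := sq_nonneg _
    set s : ℝ := t₀ - (B + 1) / (K * h t₀) with hsdef
    have hden : 0 < K * h t₀ := mul_pos hK hpos
    have hst : s ≤ t₀ := by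
      have : 0 ≤ (B + 1) / (K * h t₀) := div_nonneg (by linarith) hden.le
      simp [hsdef]; linarith
    have hHs : H t₀ ≤ H s := hHanti hst
    -- H t₀ = h t₀ * exp(K t₀), H s = h s * exp(K s); so h s ≥ h t₀ * exp(K (t₀ - s))
    have hexp : 1 + K * (t₀ - s) ≤ Real.exp (K * (t₀ - s)) := by
      have := Real.add_one_le_exp (K * (t₀ - s)); linarith
    have hsplit : Real.exp (K * t₀) = Real.exp (K * s) * Real.exp (K * (t₀ - s)) := by
      rw [← Real.exp_add]; ring_nf
    have hexps : 0 < Real.exp (K * s) := Real.exp_pos _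
    have hfrac : K * (t₀ - s) = (B + 1) / h t₀ := by
      rw [hsdef]
      field_simp
      ring
    have hhs : h t₀ * Real.exp (K * (t₀ - s)) ≤ h s := by
      have hHs' := hHs
      simp only [hHdef] at hHs'
      rw [hsplit] at hHs'
      have h2 : h t₀ * Real.exp (K * (t₀ - s)) * Real.exp (K * s) ≤ h s * Real.exp (K * s) :=
        calc h t₀ * Real.exp (K * (t₀ - s)) * Real.exp (K * s)
            = h t₀ * (Real.exp (K * s) * Real.exp (K * (t₀ - s))) := by ring
          _ ≤ h s * Real.exp (K * s) := hHs'
      exact le_of_mul_le_mul_right h2 hexps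
    have hbig : h t₀ * Real.exp (K * (t₀ - s)) ≥ h t₀ * (1 + (B + 1) / h t₀) :=
      mul_le_mul_of_nonneg_left (by rw [← hfrac]; exact hexp) hpos.le
    have hval : h t₀ * (1 + (B + 1) / h t₀) = h t₀ + B + 1 := by
      field_simp
      ring
    have := hhub s
    rw [hval] at hbig
    linarith
  -- finish
  have hzle : ‖z t₀‖ ^ 2 ≤ C ^ 2 := by
    have := hmain
    simp only [hhdef, hnorm t₀] at this
    linarith
  have hzle' : ‖z t₀‖ ≤ C := by
    nlinarith [norm_nonneg (z t₀), hC]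
  have hCeq : C = (L / (lamA - L)) * ‖x₁ - x₂‖ := by
    rw [hCdef, hDdef, hμdef]
    ring
  calc ‖y₁ t₀ - y₂ t₀‖ = ‖z t₀‖ := rfl
    _ ≤ C := hzle'
    _ = (L / (lamA - L)) * ‖x₁ - x₂‖ := hCeq
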